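/- Ill-posedness of the free-horizon problem without a stage-cost lower bound: consider the linear system on ℝ² with A = [[1, α],[0, 1]], B = (0, β)^⊤ where α ≠ 0 and β ≠ 0, stage cost ℓ(x,u) = ½u² and terminal cost Φ(x) = ‖x‖². Then for every initial state x_0 ∈ ℝ², the infimum over all horizons T ∈ ℕ and control sequences u ∈ ℝ^T of J(x_0, u, T) = Σ_{k=0}^{T−1} ½u_k² + ‖x_T‖² equals 0; moreover, if x_0 ≠ 0 this infimum is not attained, i.e. J(x_0, u, T) > 0 for every T and u. -/

import Mathlib

open Matrix

/-- Trajectory of the planar system `x_{k+1} = [[1, α],[0, 1]] x_k + (0, β)ᵀ u_k`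
with scalar control. -/
noncomputable def traj2 (α β : ℝ) (x₀ : Fin 2 → ℝ) (u : ℕ → ℝ) : ℕ → (Fin 2 → ℝ)
  | 0 => x₀
  | k + 1 => !![1, α; 0, 1] *ᵥ traj2 α β x₀ u k + u k • ![0, β]

/-- The objective `J(x₀, u, T) = Σ_{k<T} ½u_k² + ‖x_T‖²` (Euclidean norm squared). -/
noncomputable def J2 (α β : ℝ) (x₀ : Fin 2 → ℝ) (u : ℕ → ℝ) (T : ℕ) : ℝ :=
  (∑ k ∈ Finset.range T, (1 / 2) * (u k) ^ 2) +
    ((traj2 α β x₀ u T 0) ^ 2 + (traj2 α β x₀ u T 1) ^ 2)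

lemma step0 (α β : ℝ) (x₀ : Fin 2 → ℝ) (u : ℕ → ℝ) (k : ℕ) :
    traj2 α β x₀ u (k+1) 0 = traj2 α β x₀ u k 0 + α * traj2 α β x₀ u k 1 := by
  simp [traj2, mulVec, dotProduct, Fin.sum_univ_two]

lemma step1 (α β : ℝ) (x₀ : Fin 2 → ℝ) (u : ℕ → ℝ) (k : ℕ) :
    traj2 α β x₀ u (k+1) 1 = traj2 α β x₀ u k 1 + β * u k := by
  simp [traj2, mulVec, dotProduct, Fin.sum_univ_two]; ring

noncomputable def uu (c d : ℝ) (N M : ℕ) : ℕ → ℝ :=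
  fun k => if k < N then c else if k = N then d else if k = N + M then -d else 0

-- phase 1 formulas
lemma phase1 (α β c d : ℝ) (x₀ : Fin 2 → ℝ) (N M : ℕ) :
    ∀ k ≤ N, traj2 α β x₀ (uu c d N M) k 1 = x₀ 1 + β * c * k ∧
      traj2 α β x₀ (uu c d N M) k 0 = x₀ 0 + α * k * x₀ 1 + α * β * c * (k * (k-1)) / 2 := by
  intro k hk
  induction k with
  | zero => simp [traj2]
  | succ k ih =>
    have hk' : k < N := hk
    obtain ⟨ih1, ih0⟩ := ih (le_of_lt hk')
    have hu : uu c d N M k = c := by simp [uu, hk']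
    constructor
    · rw [step1, ih1, hu]; push_cast; ring
    · rw [step0, ih0, ih1]; push_cast; ring

lemma phase2 (α β c d : ℝ) (x₀ : Fin 2 → ℝ) (N M : ℕ) (hM : 1 ≤ M) :
    ∀ k, 1 ≤ k → k ≤ M →
      traj2 α β x₀ (uu c d N M) (N + k) 1 = traj2 α β x₀ (uu c d N M) N 1 + β * d ∧
      traj2 α β x₀ (uu c d N M) (N + k) 0 = traj2 α β x₀ (uu c d N M) N 0
        + α * k * traj2 α β x₀ (uu c d N M) N 1 + α * β * d * (k - 1) := by
  intro k hk1 hkM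
  induction k with
  | zero => omega
  | succ k ih =>
    rcases Nat.eq_or_lt_of_le hk1 with h1 | h1
    · -- k + 1 = 1, i.e. k = 0
      have hk0 : k = 0 := by omega
      subst hk0
      have hu : uu c d N M N = d := by simp [uu]
      constructor
      · rw [step1, hu]
      · rw [step0]; push_cast; ring
    · have hk1' : 1 ≤ k := by omega
      obtain ⟨ih1, ih0⟩ := ih hk1' (by omega)
      have hu : uu c d N M (N + k) = 0 := by
        have h2 : ¬ (N + k < N) := by omega
        have h3 : N + k ≠ N := by omega
        have h4 : N + k ≠ N + M := by omega
        simp [uu, h2, h3, h4, show k ≠ 0 by omega, show k ≠ M by omega]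
      rw [show N + (k+1) = (N + k) + 1 from rfl]
      constructor
      · rw [step1, ih1, hu]; ring
      · rw [step0, ih0, ih1]; push_cast; ring

lemma final_state (α β c d : ℝ) (x₀ : Fin 2 → ℝ) (N M : ℕ) (hM : 1 ≤ M) :
    traj2 α β x₀ (uu c d N M) (N + M + 1) 1
      = traj2 α β x₀ (uu c d N M) N 1 ∧
    traj2 α β x₀ (uu c d N M) (N + M + 1) 0
      = traj2 α β x₀ (uu c d N M) N 0
        + α * (M + 1) * traj2 α β x₀ (uu c d N M) N 1 + α * β * d * M := by
  obtain ⟨h1, h0⟩ := phase2 α β c d x₀ N M hM M hM le_rfl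
  have hu : uu c d N M (N + M) = -d := by
    have h2 : ¬ (N + M < N) := by omega
    have h3 : N + M ≠ N := by omega
    simp [uu, h2, h3, show M ≠ 0 by omega]
  constructor
  · rw [step1, h1, hu]; ring
  · rw [step0, h0, h1]; ring

lemma cost_sum (c d : ℝ) (N M : ℕ) (hM : 1 ≤ M) :
    ∑ k ∈ Finset.range (N + M + 1), (1/2 : ℝ) * (uu c d N M k)^2
      = N * c^2 / 2 + d^2 := by
  rw [Finset.sum_range_succ]
  have hu : uu c d N M (N + M) = -d := by
    have h2 : ¬ (N + M < N) := by omega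
    have h3 : N + M ≠ N := by omega
    simp [uu, h2, h3, show M ≠ 0 by omega]
  rw [hu]
  rw [Finset.range_eq_Ico, ← Finset.sum_Ico_consecutive _ (Nat.zero_le N) (by omega : N ≤ N + M)]
  have hA : ∑ k ∈ Finset.Ico 0 N, (1/2 : ℝ) * (uu c d N M k)^2 = N * c^2 / 2 := by
    rw [Finset.sum_congr rfl (fun k hk => by
      have : k < N := (Finset.mem_Ico.mp hk).2
      rw [show uu c d N M k = c by simp [uu, this]])]
    simp; ring
  have hB : ∑ k ∈ Finset.Ico N (N + M), (1/2 : ℝ) * (uu c d N M k)^2 = d^2 / 2 := by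
    rw [Finset.sum_eq_single N]
    · simp [uu]; ring
    · intro k hk hne
      have h1 := Finset.mem_Ico.mp hk
      have h2 : ¬ (k < N) := by omega
      have h4 : k ≠ N + M := by omega
      simp [uu, h2, hne, h4]
    · intro h
      exact absurd (Finset.mem_Ico.mpr ⟨le_rfl, by omega⟩) h
  rw [hA, hB]; ring

lemma small_cost (α β : ℝ) (hα : α ≠ 0) (hβ : β ≠ 0) (x₀ : Fin 2 → ℝ) {ε : ℝ} (hε : 0 < ε) :
    ∃ (T : ℕ) (u : ℕ → ℝ), J2 α β x₀ u T < ε := by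
  obtain ⟨N, hN⟩ := exists_nat_gt (max 1 (x₀ 1 ^ 2 / (β^2 * ε)))
  have hN1 : (1:ℝ) < N := lt_of_le_of_lt (le_max_left _ _) hN
  have hN0 : (0:ℝ) < N := by linarith
  have hNe : (N:ℝ) ≠ 0 := ne_of_gt hN0
  have hNb : x₀ 1 ^ 2 / (β^2 * ε) < N := lt_of_le_of_lt (le_max_right _ _) hN
  have hβ2 : (0:ℝ) < β^2 := by positivity
  have hx1 : x₀ 1 ^ 2 < N * (β^2 * ε) := (div_lt_iff₀ (by positivity)).mp hNb
  obtain ⟨c, hc⟩ : ∃ c : ℝ, c = -x₀ 1 / (β * N) := ⟨_, rfl⟩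
  -- velocity at time N is zero
  have hNnat : 1 ≤ N := by exact_mod_cast hN1.le
  obtain ⟨p, hp⟩ : ∃ p : ℝ, p = x₀ 0 + α * N * x₀ 1 + α * β * c * (N * (N-1)) / 2 := ⟨_, rfl⟩
  obtain ⟨M, hM⟩ := exists_nat_gt (max 1 (p ^ 2 / (α^2 * β^2 * (ε/2))))
  have hM1 : (1:ℝ) < M := lt_of_le_of_lt (le_max_left _ _) hM
  have hM0 : (0:ℝ) < M := by linarith
  have hMe : (M:ℝ) ≠ 0 := ne_of_gt hM0
  have hMb : p ^ 2 / (α^2 * β^2 * (ε/2)) < M := lt_of_le_of_lt (le_max_right _ _) hM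
  have hpM : p ^ 2 < M * (α^2 * β^2 * (ε/2)) := (div_lt_iff₀ (by positivity)).mp hMb
  have hMnat : 1 ≤ M := by exact_mod_cast hM1.le
  obtain ⟨d, hd⟩ : ∃ d : ℝ, d = -p / (α * β * M) := ⟨_, rfl⟩
  refine ⟨N + M + 1, uu c d N M, ?_⟩
  obtain ⟨hv1, hv0⟩ := phase1 α β c d x₀ N M N le_rfl
  have hvN : traj2 α β x₀ (uu c d N M) N 1 = 0 := by
    rw [hv1, hc]; field_simp; ring
  have hpN : traj2 α β x₀ (uu c d N M) N 0 = p := by rw [hv0, hp]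
  obtain ⟨hf1, hf0⟩ := final_state α β c d x₀ N M hMnat
  have hfin1 : traj2 α β x₀ (uu c d N M) (N + M + 1) 1 = 0 := by rw [hf1, hvN]
  have hfin0 : traj2 α β x₀ (uu c d N M) (N + M + 1) 0 = 0 := by
    rw [hf0, hvN, hpN, hd]; field_simp; ring
  have hcost := cost_sum c d N M hMnat
  simp only [J2]
  rw [hcost, hfin0, hfin1]
  clear hv1 hv0 hvN hpN hf1 hf0 hfin0 hfin1 hcost
  have e1 : (N:ℝ) * c^2/2 = x₀ 1 ^2 / (2*β^2*N) := by
    rw [hc]; field_simp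
  have e2 : d^2 = p^2 / (α^2*β^2*M^2) := by
    rw [hd, div_pow, neg_sq]; congr 1; ring
  have l1 : (N:ℝ) * c^2/2 < ε/2 := by
    rw [e1, div_lt_div_iff₀ (by positivity) two_pos]; linarith [hx1]
  have hMsq : (M:ℝ) ≤ (M:ℝ)^2 := by nlinarith [hM1]
  have l2 : d^2 < ε/2 := by
    rw [e2, div_lt_iff₀ (by positivity)]
    have h5 : (M:ℝ) * (α^2 * β^2 * (ε/2)) ≤ (M:ℝ)^2 * (α^2 * β^2 * (ε/2)) :=
      mul_le_mul_of_nonneg_right hMsq (by positivity)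
    linarith [hpM, h5]
  norm_num
  linarith

lemma zero_ctrl (α β : ℝ) (x₀ : Fin 2 → ℝ) (u : ℕ → ℝ) (T : ℕ)
    (hu : ∀ k < T, u k = 0) :
    ∀ k ≤ T, traj2 α β x₀ u k 1 = x₀ 1 ∧ traj2 α β x₀ u k 0 = x₀ 0 + α * k * x₀ 1 := by
  intro k hk
  induction k with
  | zero => simp [traj2]
  | succ k ih =>
    obtain ⟨ih1, ih0⟩ := ih (by omega)
    constructor
    · rw [step1, ih1, hu k (by omega)]; ring
    · rw [step0, ih0, ih1]; push_cast; ring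

lemma J2_nonneg (α β : ℝ) (x₀ : Fin 2 → ℝ) (u : ℕ → ℝ) (T : ℕ) : 0 ≤ J2 α β x₀ u T := by
  have h1 : 0 ≤ ∑ k ∈ Finset.range T, (1/2 : ℝ) * (u k)^2 :=
    Finset.sum_nonneg fun k _ => by positivity
  have h2 : 0 ≤ (traj2 α β x₀ u T 0)^2 + (traj2 α β x₀ u T 1)^2 := by positivity
  simpa [J2] using add_nonneg h1 h2

lemma J2_pos (α β : ℝ) (x₀ : Fin 2 → ℝ) (hx : x₀ ≠ 0) (T : ℕ) (u : ℕ → ℝ) :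
    0 < J2 α β x₀ u T := by
  rcases (J2_nonneg α β x₀ u T).lt_or_eq with h | h
  · exact h
  exfalso
  have h1 : 0 ≤ ∑ k ∈ Finset.range T, (1/2 : ℝ) * (u k)^2 :=
    Finset.sum_nonneg fun k _ => by positivity
  have h2 : (0:ℝ) ≤ (traj2 α β x₀ u T 0)^2 := sq_nonneg _
  have h3 : (0:ℝ) ≤ (traj2 α β x₀ u T 1)^2 := sq_nonneg _
  have hJ : (∑ k ∈ Finset.range T, (1/2 : ℝ) * (u k)^2) +
      ((traj2 α β x₀ u T 0)^2 + (traj2 α β x₀ u T 1)^2) = 0 := by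
    rw [← J2]; exact h.symm
  have hS : ∑ k ∈ Finset.range T, (1/2 : ℝ) * (u k)^2 = 0 := by linarith
  have ht0 : traj2 α β x₀ u T 0 = 0 := by
    have : (traj2 α β x₀ u T 0)^2 = 0 := by linarith
    exact pow_eq_zero_iff (by norm_num) |>.mp this
  have ht1 : traj2 α β x₀ u T 1 = 0 := by
    have : (traj2 α β x₀ u T 1)^2 = 0 := by linarith
    exact pow_eq_zero_iff (by norm_num) |>.mp this
  have hu : ∀ k < T, u k = 0 := by
    intro k hk
    have := (Finset.sum_eq_zero_iff_of_nonneg (fun k _ => by positivity)).mp hS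
      k (Finset.mem_range.mpr hk)
    have : (u k)^2 = 0 := by linarith
    exact pow_eq_zero_iff (by norm_num) |>.mp this
  obtain ⟨e1, e0⟩ := zero_ctrl α β x₀ u T hu T le_rfl
  have hx1 : x₀ 1 = 0 := by rw [e1] at ht1; exact ht1
  have hx0 : x₀ 0 = 0 := by
    rw [e0, hx1] at ht0; linarith [ht0]
  apply hx
  funext i
  fin_cases i <;> simpa [hx0, hx1]


/-- Ill-posedness of the free-horizon problem without a stage-cost lower bound:
for `α ≠ 0`, `β ≠ 0`, the infimum of `J(x₀, u, T)` over all horizons `T` and control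
sequences `u` is `0`, and when `x₀ ≠ 0` it is not attained: `J(x₀, u, T) > 0` for all
`T` and `u`. -/
theorem free_horizon_ill_posed (α β : ℝ) (hα : α ≠ 0) (hβ : β ≠ 0) (x₀ : Fin 2 → ℝ) :
    sInf {v : ℝ | ∃ (T : ℕ) (u : ℕ → ℝ), v = J2 α β x₀ u T} = 0 ∧
      (x₀ ≠ 0 → ∀ (T : ℕ) (u : ℕ → ℝ), 0 < J2 α β x₀ u T) := by
  constructor
  · set S := {v : ℝ | ∃ (T : ℕ) (u : ℕ → ℝ), v = J2 α β x₀ u T} with hSdef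
    have hne : S.Nonempty := ⟨J2 α β x₀ (fun _ => 0) 0, 0, fun _ => 0, rfl⟩
    have hbdd : BddBelow S := ⟨0, fun v ⟨T, u, hv⟩ => hv ▸ J2_nonneg α β x₀ u T⟩
    apply le_antisymm
    · rw [Real.sInf_le_iff hbdd hne]
      intro ε hε
      obtain ⟨T, u, h⟩ := small_cost α β hα hβ x₀ hε
      exact ⟨J2 α β x₀ u T, ⟨T, u, rfl⟩, by linarith⟩
    · exact le_csInf hne fun v ⟨T, u, hv⟩ => hv ▸ J2_nonneg α β x₀ u T
  · intro hx T u
    exact J2_pos α β x₀ hx T u
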